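/- arXiv:1807.06686 — 12 statements merged into one kernel-verified Lean document; each statement's English description precedes it below -/
import Mathlib

section
/- For every γ ≥ 1, the Sørensen_γ similarity S(X,Y) = |X ∩ Y| / (|X ∩ Y| + γ|X △ Y|) (with S(X,X) = 1) is supermodular with respect to the symmetric difference: for every fixed X ⊆ V, the set function f_X : A ↦ S(X, X △ A) is supermodular. -/
set_option maxHeartbeats 1000000

open Finset

private lemma Dpos (γ x p q : ℝ) (hγ : 1 ≤ γ) (hx : 0 < x) (hp : 0 ≤ p) (hq : 0 ≤ q) :
    0 < x + (γ-1)*p + γ*q := by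
  nlinarith [mul_nonneg (sub_nonneg.2 hγ) hp, mul_nonneg (le_trans zero_le_one hγ) hq]

/-- p-increment of h is monotone in the base point. -/
private lemma stepP (γ x p₁ q₁ p₂ q₂ r₁ r₂ : ℝ) (hγ : 1 ≤ γ) (hx : 0 < x)
    (hp2 : 0 ≤ p₂) (hq2 : 0 ≤ q₂) (hp : p₂ ≤ p₁) (hq : q₂ ≤ q₁)
    (hr : r₁ - p₁ = r₂ - p₂) (hrp : p₁ ≤ r₁) (hpx : p₁ ≤ x) :
    (x-r₁)/(x+(γ-1)*r₁+γ*q₁) - (x-p₁)/(x+(γ-1)*p₁+γ*q₁) ≥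
      (x-r₂)/(x+(γ-1)*r₂+γ*q₂) - (x-p₂)/(x+(γ-1)*p₂+γ*q₂) := by
  have hγ0 : 0 ≤ γ := le_trans zero_le_one hγ
  have hp1 : 0 ≤ p₁ := le_trans hp2 hp
  have hq1 : 0 ≤ q₁ := le_trans hq2 hq
  have hr2 : p₂ ≤ r₂ := by linarith
  have hr1 : 0 ≤ r₁ := le_trans hp1 hrp
  have hr2' : 0 ≤ r₂ := le_trans hp2 hr2
  have D1 := Dpos γ x p₁ q₁ hγ hx hp1 hq1
  have D1' := Dpos γ x r₁ q₁ hγ hx hr1 hq1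
  have D2 := Dpos γ x p₂ q₂ hγ hx hp2 hq2
  have D2' := Dpos γ x r₂ q₂ hγ hx hr2' hq2
  have hs0 : 0 ≤ r₁ - p₁ := by linarith
  have e1 : (x-r₁)/(x+(γ-1)*r₁+γ*q₁) - (x-p₁)/(x+(γ-1)*p₁+γ*q₁)
      = -((r₁-p₁)*γ*(x+q₁))/((x+(γ-1)*p₁+γ*q₁)*(x+(γ-1)*r₁+γ*q₁)) := by
    rw [div_sub_div _ _ D1'.ne' D1.ne', div_eq_div_iff (mul_ne_zero D1'.ne' D1.ne') (mul_ne_zero D1.ne' D1'.ne')]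
    ring
  have e2 : (x-r₂)/(x+(γ-1)*r₂+γ*q₂) - (x-p₂)/(x+(γ-1)*p₂+γ*q₂)
      = -((r₂-p₂)*γ*(x+q₂))/((x+(γ-1)*p₂+γ*q₂)*(x+(γ-1)*r₂+γ*q₂)) := by
    rw [div_sub_div _ _ D2'.ne' D2.ne', div_eq_div_iff (mul_ne_zero D2'.ne' D2.ne') (mul_ne_zero D2.ne' D2'.ne')]
    ring
  rw [e1, e2, ge_iff_le, neg_div, neg_div, neg_le_neg_iff,
    div_le_div_iff₀ (by positivity) (by positivity)]
  have hxq2 : (0:ℝ) ≤ x + q₂ := by linarith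
  have hΔ : (0:ℝ) ≤ q₁ - q₂ := by linarith
  have hDle : x+(γ-1)*p₂+γ*q₂ ≤ γ*(x+q₂) := by
    nlinarith [mul_nonneg (sub_nonneg.2 hγ) (sub_nonneg.2 (le_trans hp hpx))]
  have h1 : x+(γ-1)*p₂+γ*q₂ + γ*(q₁-q₂) ≤ x+(γ-1)*p₁+γ*q₁ := by
    nlinarith [mul_nonneg (sub_nonneg.2 hγ) (sub_nonneg.2 hp)]
  have h1' : x+(γ-1)*r₂+γ*q₂ + γ*(q₁-q₂) ≤ x+(γ-1)*r₁+γ*q₁ := by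
    nlinarith [mul_nonneg (sub_nonneg.2 hγ) (show (0:ℝ) ≤ r₁ - r₂ by linarith)]
  have h3 : (x+(γ-1)*p₂+γ*q₂)*(x+(γ-1)*r₂+γ*q₂)
      ≤ γ*(x+q₂)*((x+(γ-1)*p₂+γ*q₂)+(x+(γ-1)*r₂+γ*q₂)) := by
    nlinarith [mul_le_mul_of_nonneg_right hDle (le_of_lt D2'),
      mul_nonneg (mul_nonneg hγ0 hxq2) (le_of_lt D2)]
  have key1 : (x+q₁)*((x+(γ-1)*p₂+γ*q₂)*(x+(γ-1)*r₂+γ*q₂))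
      ≤ (x+q₂)*(((x+(γ-1)*p₂+γ*q₂)+γ*(q₁-q₂))*((x+(γ-1)*r₂+γ*q₂)+γ*(q₁-q₂))) := by
    nlinarith [mul_nonneg hΔ (sub_nonneg.2 h3),
      mul_nonneg (mul_nonneg (mul_nonneg hγ0 hΔ) (mul_nonneg hγ0 hΔ)) hxq2]
  have key2 : (x+q₁)*((x+(γ-1)*p₂+γ*q₂)*(x+(γ-1)*r₂+γ*q₂))
      ≤ (x+q₂)*((x+(γ-1)*p₁+γ*q₁)*(x+(γ-1)*r₁+γ*q₁)) := by
    refine le_trans key1 ?_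
    have hb1 : (0:ℝ) < (x+(γ-1)*p₂+γ*q₂)+γ*(q₁-q₂) := by positivity
    have hb2 : (0:ℝ) < (x+(γ-1)*r₂+γ*q₂)+γ*(q₁-q₂) := by positivity
    gcongr <;> linarith
  rw [← hr]
  nlinarith [mul_le_mul_of_nonneg_left key2 (mul_nonneg hs0 hγ0)]

/-- q-increment of h is monotone in the base point. -/
private lemma stepQ (γ x p₁ p₂ v₁ w₁ v₂ w₂ : ℝ) (hγ : 1 ≤ γ) (hx : 0 < x)
    (hp2 : 0 ≤ p₂) (hv2 : 0 ≤ v₂) (hp : p₂ ≤ p₁) (hv : v₂ ≤ v₁)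
    (hw : w₁ - v₁ = w₂ - v₂) (hvw : v₁ ≤ w₁) (hpx : p₁ ≤ x) :
    (x-p₁)/(x+(γ-1)*p₁+γ*w₁) - (x-p₁)/(x+(γ-1)*p₁+γ*v₁) ≥
      (x-p₂)/(x+(γ-1)*p₂+γ*w₂) - (x-p₂)/(x+(γ-1)*p₂+γ*v₂) := by
  have hγ0 : 0 ≤ γ := le_trans zero_le_one hγ
  have hp1 : 0 ≤ p₁ := le_trans hp2 hp
  have hv1 : 0 ≤ v₁ := le_trans hv2 hv
  have hw1 : 0 ≤ w₁ := le_trans hv1 hvw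
  have hw2' : v₂ ≤ w₂ := by linarith
  have hw2 : 0 ≤ w₂ := le_trans hv2 hw2'
  have Dv1 := Dpos γ x p₁ v₁ hγ hx hp1 hv1
  have Dw1 := Dpos γ x p₁ w₁ hγ hx hp1 hw1
  have Dv2 := Dpos γ x p₂ v₂ hγ hx hp2 hv2
  have Dw2 := Dpos γ x p₂ w₂ hγ hx hp2 hw2
  have ht0 : 0 ≤ w₁ - v₁ := by linarith
  have e1 : (x-p₁)/(x+(γ-1)*p₁+γ*w₁) - (x-p₁)/(x+(γ-1)*p₁+γ*v₁)
      = -((w₁-v₁)*γ*(x-p₁))/((x+(γ-1)*p₁+γ*v₁)*(x+(γ-1)*p₁+γ*w₁)) := by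
    rw [div_sub_div _ _ Dw1.ne' Dv1.ne', div_eq_div_iff (mul_ne_zero Dw1.ne' Dv1.ne') (mul_ne_zero Dv1.ne' Dw1.ne')]
    ring
  have e2 : (x-p₂)/(x+(γ-1)*p₂+γ*w₂) - (x-p₂)/(x+(γ-1)*p₂+γ*v₂)
      = -((w₂-v₂)*γ*(x-p₂))/((x+(γ-1)*p₂+γ*v₂)*(x+(γ-1)*p₂+γ*w₂)) := by
    rw [div_sub_div _ _ Dw2.ne' Dv2.ne', div_eq_div_iff (mul_ne_zero Dw2.ne' Dv2.ne') (mul_ne_zero Dv2.ne' Dw2.ne')]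
    ring
  rw [e1, e2, ge_iff_le, neg_div, neg_div, neg_le_neg_iff,
    div_le_div_iff₀ (by positivity) (by positivity), ← hw]
  have hDv : x+(γ-1)*p₂+γ*v₂ ≤ x+(γ-1)*p₁+γ*v₁ := by
    nlinarith [mul_nonneg (sub_nonneg.2 hγ) (sub_nonneg.2 hp)]
  have hDw : x+(γ-1)*p₂+γ*w₂ ≤ x+(γ-1)*p₁+γ*w₁ := by
    nlinarith [mul_nonneg (sub_nonneg.2 hγ) (sub_nonneg.2 hp)]
  have m1 : (x+(γ-1)*p₂+γ*v₂)*(x+(γ-1)*p₂+γ*w₂) ≤ (x+(γ-1)*p₁+γ*v₁)*(x+(γ-1)*p₁+γ*w₁) :=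
    mul_le_mul hDv hDw (le_of_lt Dw2) (by linarith)
  have m2 : (x-p₁)*((x+(γ-1)*p₂+γ*v₂)*(x+(γ-1)*p₂+γ*w₂))
      ≤ (x-p₂)*((x+(γ-1)*p₁+γ*v₁)*(x+(γ-1)*p₁+γ*w₁)) :=
    mul_le_mul (by linarith) m1 (by positivity) (by linarith)
  nlinarith [mul_le_mul_of_nonneg_left m2 (mul_nonneg ht0 hγ0)]

private lemma keyIneq (γ x a b c d a' b' c' d' : ℝ) (hγ : 1 ≤ γ) (hx : 0 < x)
    (hd : 0 ≤ d) (hd' : 0 ≤ d') (hdb : d ≤ b) (hdc : d ≤ c) (hsum : a + d = b + c)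
    (hdb' : d' ≤ b') (hdc' : d' ≤ c') (hsum' : a' + d' = b' + c') (hax : a ≤ x) :
    (x-a)/(x+(γ-1)*a+γ*a') + (x-d)/(x+(γ-1)*d+γ*d')
      ≥ (x-b)/(x+(γ-1)*b+γ*b') + (x-c)/(x+(γ-1)*c+γ*c') := by
  have hba : b ≤ a := by linarith
  have SP := stepP γ x b a' d c' a c hγ hx hd (le_trans hd' hdc') hdb (by linarith) (by linarith)
    hba (le_trans hba hax)
  have SQ := stepQ γ x b d b' a' d' c' hγ hx hd hd' hdb hdb' (by linarith) (by linarith)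
    (le_trans hba hax)
  linarith [SP, SQ]

open Finset

/-- The Sørensen_γ similarity is supermodular w.r.t. the symmetric difference for γ ≥ 1. -/
theorem sorensen_gamma_supermodular {V : Type*} [Fintype V] [DecidableEq V]
    (γ : ℝ) (hγ : 1 ≤ γ)
    (S : Finset V → Finset V → ℝ)
    (hS : ∀ X Y : Finset V, X ≠ Y →
      S X Y = (X ∩ Y).card / ((X ∩ Y).card + γ * (symmDiff X Y).card))
    (hS' : ∀ X : Finset V, S X X = 1)
    (X : Finset V) :
    ∀ A B : Finset V,
      S X (symmDiff X (A ∪ B)) + S X (symmDiff X (A ∩ B)) ≥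
        S X (symmDiff X A) + S X (symmDiff X B) := by
  intro A B
  have hγ0 : (0:ℝ) < γ := lt_of_lt_of_le zero_lt_one hγ
  by_cases hX : X = ∅
  · -- degenerate case: X is empty
    subst hX
    have hsd : ∀ C : Finset V, symmDiff (∅ : Finset V) C = C := by
      intro C; ext a; simp [mem_symmDiff]
    have hzero : ∀ C : Finset V, C ≠ ∅ → S ∅ C = 0 := by
      intro C hC
      rw [hS ∅ C (Ne.symm hC)]
      simp
    rw [hsd, hsd, hsd, hsd]
    by_cases hA : A = ∅
    · subst hA; simp only [empty_union, empty_inter]; linarith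
    · by_cases hB : B = ∅
      · subst hB; simp only [union_empty, inter_empty]; linarith
      · have h1 : S ∅ (A ∪ B) = 0 := hzero _ (fun h => hA (union_eq_empty.1 h).1)
        have h2 : S ∅ A = 0 := hzero _ hA
        have h3 : S ∅ B = 0 := hzero _ hB
        have h4 : (0:ℝ) ≤ S ∅ (A ∩ B) := by
          rcases eq_or_ne (A ∩ B) ∅ with h | h
          · rw [h, hS']; norm_num
          · rw [hzero _ h]
        linarith
  · -- main case: X nonempty
    have hx : 0 < ((X.card : ℕ) : ℝ) := by
      exact_mod_cast card_pos.2 (nonempty_iff_ne_empty.2 hX)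
    have hform : ∀ C : Finset V, S X (symmDiff X C) =
        ((X.card:ℝ) - ((X ∩ C).card:ℝ)) /
          ((X.card:ℝ) + (γ-1)*((X ∩ C).card:ℝ) + γ*(((C \ X).card:ℝ))) := by
      intro C
      rcases eq_or_ne C ∅ with rfl | hC
      · have h1 : symmDiff X (∅ : Finset V) = X := by ext a; simp [mem_symmDiff]
        rw [h1, hS' X]
        simp only [inter_empty, empty_sdiff, card_empty, Nat.cast_zero]
        rw [eq_comm]
        simp only [mul_zero, add_zero, sub_zero]
        exact div_self hx.ne'
      · have hne : X ≠ symmDiff X C := by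
          intro h
          apply hC
          have h2 := symmDiff_symmDiff_cancel_left X C
          rw [← h] at h2
          simpa using h2.symm
        rw [hS X _ hne, symmDiff_symmDiff_cancel_left X C]
        have hint : X ∩ symmDiff X C = X \ C := by
          ext a; simp [mem_symmDiff]; tauto
        rw [hint]
        have c1 : (((X \ C).card : ℕ) : ℝ) = (X.card:ℝ) - ((X ∩ C).card:ℝ) := by
          have := card_sdiff_add_card_inter X C
          have : ((X \ C).card : ℝ) + ((X ∩ C).card : ℝ) = (X.card : ℝ) := by
            exact_mod_cast this
          linarith
        have c2 : ((C.card : ℕ) : ℝ) = ((X ∩ C).card:ℝ) + (((C \ X).card:ℝ)) := by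
          have := card_sdiff_add_card_inter C X
          have h3 : ((C \ X).card : ℝ) + ((C ∩ X).card : ℝ) = (C.card : ℝ) := by
            exact_mod_cast this
          rw [inter_comm] at h3
          linarith
        rw [c1, c2]
        congr 1
        ring
    rw [hform (A ∪ B), hform (A ∩ B), hform A, hform B]
    apply keyIneq γ ((X.card : ℕ) : ℝ) _ _ _ _ _ _ _ _ hγ hx
    · positivity
    · positivity
    · exact_mod_cast card_le_card (inter_subset_inter (Subset.refl X) inter_subset_left)
    · exact_mod_cast card_le_card (inter_subset_inter (Subset.refl X) inter_subset_right)
    · have h5 : (X ∩ (A ∪ B)).card + (X ∩ (A ∩ B)).card = (X ∩ A).card + (X ∩ B).card := by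
        rw [inter_union_distrib_left, inter_inter_distrib_left]
        exact card_union_add_card_inter _ _
      exact_mod_cast h5
    · exact_mod_cast card_le_card (sdiff_subset_sdiff inter_subset_left (Subset.refl X))
    · exact_mod_cast card_le_card (sdiff_subset_sdiff inter_subset_right (Subset.refl X))
    · have hint2 : (A ∩ B) \ X = (A \ X) ∩ (B \ X) := by
        ext a; simp; tauto
      have h5 : ((A ∪ B) \ X).card + ((A ∩ B) \ X).card = (A \ X).card + (B \ X).card := by
        rw [union_sdiff_distrib, hint2]
        exact card_union_add_card_inter _ _
      exact_mod_cast h5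
    · exact_mod_cast card_le_card inter_subset_left
end

section
/- For every fixed X ⊆ V and γ ≥ 1, the set function A ↦ S(X, X △ A) induced by the Sørensen_γ similarity is monotonically decreasing: A ⊆ B implies S(X, X △ A) ≥ S(X, X △ B). -/
open Finset

lemma inter_symmDiff_self {V : Type*} [DecidableEq V] (X A : Finset V) :
    X ∩ (symmDiff X A) = X \ A := by
  ext x
  simp [Finset.mem_symmDiff]
  tauto

/-- The set function induced by the Sørensen_γ similarity (γ ≥ 1) is monotonically decreasing. -/
theorem sorensen_gamma_monotone_decreasing {V : Type*} [Fintype V] [DecidableEq V]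
    (γ : ℝ) (hγ : 1 ≤ γ)
    (S : Finset V → Finset V → ℝ)
    (hS : ∀ X Y : Finset V, X ≠ Y →
      S X Y = (X ∩ Y).card / ((X ∩ Y).card + γ * (symmDiff X Y).card))
    (hS' : ∀ X : Finset V, S X X = 1)
    (X : Finset V) :
    ∀ A B : Finset V, A ⊆ B → S X (symmDiff X A) ≥ S X (symmDiff X B) := by
  intro A B hAB
  have key : ∀ C : Finset V, C ≠ ∅ →
      S X (symmDiff X C) = (X \ C).card / ((X \ C).card + γ * C.card) := by
    intro C hC
    have hne : X ≠ symmDiff X C := by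
      intro h
      apply hC
      have := symmDiff_symmDiff_cancel_left X C
      rw [← h] at this
      simpa using this.symm
    rw [hS X _ hne, inter_symmDiff_self, symmDiff_symmDiff_cancel_left]
  have hbound : ∀ C : Finset V, C ≠ ∅ →
      (X \ C).card / ((X \ C).card + γ * C.card) ≤ 1 := by
    intro C hC
    have hc : (1 : ℝ) ≤ (C.card : ℝ) :=
      Nat.one_le_cast.mpr (Finset.card_pos.mpr (Finset.nonempty_iff_ne_empty.mpr hC))
    have hden : (0 : ℝ) < (X \ C).card + γ * C.card := by
      have : (1:ℝ) ≤ γ * (C.card : ℝ) := by nlinarith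
      positivity
    rw [div_le_one hden]
    nlinarith [(Nat.cast_nonneg (X \ C).card : (0:ℝ) ≤ ((X \ C).card : ℝ))]
  by_cases hA : A = ∅
  · subst hA
    by_cases hB : B = ∅
    · subst hB; exact le_refl _
    · rw [key B hB]
      simp only [symmDiff_bot, ge_iff_le]
      rw [show symmDiff X (∅ : Finset V) = X by simp [Finset.ext_iff, Finset.mem_symmDiff], hS']
      exact hbound B hB
  · have hB : B ≠ ∅ := fun h => hA (Finset.subset_empty.mp (h ▸ hAB))
    rw [key A hA, key B hB, ge_iff_le]
    set a := ((X \ A).card : ℝ)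
    set b := ((X \ B).card : ℝ)
    set s := ((A).card : ℝ)
    set t := ((B).card : ℝ)
    have hba : b ≤ a :=
      Nat.cast_le.mpr (Finset.card_le_card (Finset.sdiff_subset_sdiff (le_refl X) hAB))
    have hst : s ≤ t := Nat.cast_le.mpr (Finset.card_le_card hAB)
    have hs : (1:ℝ) ≤ s :=
      Nat.one_le_cast.mpr (Finset.card_pos.mpr (Finset.nonempty_iff_ne_empty.mpr hA))
    have hb : (0:ℝ) ≤ b := Nat.cast_nonneg _
    have hdenA : (0:ℝ) < a + γ * s := by nlinarith
    have hdenB : (0:ℝ) < b + γ * t := by nlinarith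
    rw [div_le_div_iff₀ hdenB hdenA]
    have hbs : b * s ≤ a * t :=
      mul_le_mul hba hst (by linarith) (by linarith)
    nlinarith [hbs, hγ]
end

section
/- For every 0 < γ < 1, the Sørensen_γ similarity S(X,Y) = |X ∩ Y| / (|X ∩ Y| + γ|X △ Y|) is neither submodular nor supermodular with respect to the symmetric difference: there exist a finite base set V, X ⊆ V, and sets witnessing violation of each of the two inequalities for f_X : A ↦ S(X, X △ A). -/
open Finset

/-- The Sørensen_γ similarity, with 0/0 interpreted as 0 (Lean's division convention). -/
noncomputable def sorensenSim (n : ℕ) (γ : ℝ) (X Y : Finset (Fin n)) : ℝ :=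
  if X = Y then 1 else (X ∩ Y).card / ((X ∩ Y).card + γ * (symmDiff X Y).card)

/-- For 0 < γ < 1, the Sørensen_γ similarity is neither submodular nor supermodular
w.r.t. the symmetric difference. -/
theorem sorensen_gamma_neither_sub_nor_supermodular (γ : ℝ) (h0 : 0 < γ) (h1 : γ < 1) :
    (∃ (n : ℕ) (X A B : Finset (Fin n)),
      sorensenSim n γ X (symmDiff X (A ∪ B)) + sorensenSim n γ X (symmDiff X (A ∩ B)) >
        sorensenSim n γ X (symmDiff X A) + sorensenSim n γ X (symmDiff X B)) ∧
    (∃ (n : ℕ) (X A B : Finset (Fin n)),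
      sorensenSim n γ X (symmDiff X (A ∪ B)) + sorensenSim n γ X (symmDiff X (A ∩ B)) <
        sorensenSim n γ X (symmDiff X A) + sorensenSim n γ X (symmDiff X B)) := by
  constructor
  · refine ⟨3, {0}, {1}, {2}, ?_⟩
    have e1 : symmDiff ({0} : Finset (Fin 3)) ({1} ∪ {2}) = {0,1,2} := by decide
    have e2 : symmDiff ({0} : Finset (Fin 3)) ({1} ∩ {2}) = {0} := by decide
    have e3 : symmDiff ({0} : Finset (Fin 3)) ({1} : Finset (Fin 3)) = {0,1} := by decide
    have e4 : symmDiff ({0} : Finset (Fin 3)) ({2} : Finset (Fin 3)) = {0,2} := by decide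
    rw [e1, e2, e3, e4]
    have v1 : sorensenSim 3 γ {0} {0,1,2} = 1/(1+γ*2) := by
      rw [sorensenSim, if_neg (by decide)]
      have : (({0} : Finset (Fin 3)) ∩ {0,1,2}).card = 1 := by decide
      have h2 : (symmDiff ({0} : Finset (Fin 3)) {0,1,2}).card = 2 := by decide
      rw [this, h2]; norm_num
    have v2 : sorensenSim 3 γ {0} {0} = 1 := by rw [sorensenSim, if_pos rfl]
    have v3 : sorensenSim 3 γ {0} {0,1} = 1/(1+γ*1) := by
      rw [sorensenSim, if_neg (by decide)]
      have : (({0} : Finset (Fin 3)) ∩ {0,1}).card = 1 := by decide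
      have h2 : (symmDiff ({0} : Finset (Fin 3)) {0,1}).card = 1 := by decide
      rw [this, h2]; norm_num
    have v4 : sorensenSim 3 γ {0} {0,2} = 1/(1+γ*1) := by
      rw [sorensenSim, if_neg (by decide)]
      have : (({0} : Finset (Fin 3)) ∩ {0,2}).card = 1 := by decide
      have h2 : (symmDiff ({0} : Finset (Fin 3)) {0,2}).card = 1 := by decide
      rw [this, h2]; norm_num
    rw [v1, v2, v3, v4]
    have p1 : (0:ℝ) < 1 + γ*2 := by linarith
    have p2 : (0:ℝ) < 1 + γ*1 := by linarith
    rw [gt_iff_lt, div_add_div _ _ (ne_of_gt p2) (ne_of_gt p2), div_add' _ _ _ (ne_of_gt p1),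
      div_lt_div_iff₀ (by positivity) (by positivity)]
    ring_nf
    nlinarith [sq_nonneg γ]
  · refine ⟨2, {0,1}, {0}, {1}, ?_⟩
    have e1 : symmDiff ({0,1} : Finset (Fin 2)) ({0} ∪ {1}) = ∅ := by decide
    have e2 : symmDiff ({0,1} : Finset (Fin 2)) ({0} ∩ {1}) = {0,1} := by decide
    have e3 : symmDiff ({0,1} : Finset (Fin 2)) ({0} : Finset (Fin 2)) = {1} := by decide
    have e4 : symmDiff ({0,1} : Finset (Fin 2)) ({1} : Finset (Fin 2)) = {0} := by decide
    rw [e1, e2, e3, e4]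
    have v1 : sorensenSim 2 γ {0,1} ∅ = 0 := by
      rw [sorensenSim, if_neg (by decide)]
      have : (({0,1} : Finset (Fin 2)) ∩ ∅).card = 0 := by decide
      rw [this]; norm_num
    have v2 : sorensenSim 2 γ {0,1} {0,1} = 1 := by rw [sorensenSim, if_pos rfl]
    have v3 : sorensenSim 2 γ {0,1} {1} = 1/(1+γ*1) := by
      rw [sorensenSim, if_neg (by decide)]
      have : (({0,1} : Finset (Fin 2)) ∩ {1}).card = 1 := by decide
      have h2 : (symmDiff ({0,1} : Finset (Fin 2)) {1}).card = 1 := by decide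
      rw [this, h2]; norm_num
    have v4 : sorensenSim 2 γ {0,1} {0} = 1/(1+γ*1) := by
      rw [sorensenSim, if_neg (by decide)]
      have : (({0,1} : Finset (Fin 2)) ∩ {0}).card = 1 := by decide
      have h2 : (symmDiff ({0,1} : Finset (Fin 2)) {0}).card = 1 := by decide
      rw [this, h2]; norm_num
    rw [v1, v2, v3, v4]
    have p2 : (0:ℝ) < 1 + γ*1 := by linarith
    rw [div_add_div _ _ (ne_of_gt p2) (ne_of_gt p2), lt_div_iff₀ (by positivity)]
    nlinarith
end

section
/- For every γ ≥ 1, the Sokal–Sneath_γ similarity S(X,Y) = (|V| − |X △ Y|) / (|V| + (γ−1)|X △ Y|) is supermodular with respect to the symmetric difference: for every fixed X ⊆ V, the set function f_X : A ↦ S(X, X △ A) is supermodular. -/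
open Finset

private lemma key_ineq (n c u i a b : ℝ) (hn : 0 < n) (hc : 0 ≤ c)
    (hu : 0 ≤ u) (hi : 0 ≤ i) (ha : 0 ≤ a) (hb : 0 ≤ b)
    (hsum : u + i = a + b) (hprod : u * i ≤ a * b) :
    (n - a) / (n + c * a) + (n - b) / (n + c * b) ≤
      (n - u) / (n + c * u) + (n - i) / (n + c * i) := by
  have dpos : ∀ x : ℝ, 0 ≤ x → 0 < n + c * x := fun x hx => by nlinarith
  have du := dpos u hu
  have di := dpos i hi
  have da := dpos a ha
  have db := dpos b hb
  rw [div_add_div _ _ (ne_of_gt da) (ne_of_gt db),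
    div_add_div _ _ (ne_of_gt du) (ne_of_gt di),
    div_le_div_iff₀ (by positivity) (by positivity)]
  have hb' : b = u + i - a := by linarith
  subst hb'
  nlinarith [mul_nonneg (mul_nonneg (mul_nonneg hc (by linarith : (0:ℝ) ≤ 1 + c))
      (sub_nonneg.2 hprod))
      (by nlinarith : (0:ℝ) ≤ 2 * n ^ 2 + c * n * (u + i))]

/-- The Sokal–Sneath_γ similarity is supermodular w.r.t. the symmetric difference for γ ≥ 1. -/
theorem sokal_sneath_gamma_supermodular {V : Type*} [Fintype V] [DecidableEq V] [Nonempty V]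
    (γ : ℝ) (hγ : 1 ≤ γ)
    (S : Finset V → Finset V → ℝ)
    (hS : ∀ X Y : Finset V,
      S X Y = ((Finset.univ : Finset V).card - (symmDiff X Y).card) /
        ((Finset.univ : Finset V).card + (γ - 1) * (symmDiff X Y).card))
    (X : Finset V) :
    ∀ A B : Finset V,
      S X (symmDiff X (A ∪ B)) + S X (symmDiff X (A ∩ B)) ≥
        S X (symmDiff X A) + S X (symmDiff X B) := by
  intro A B
  simp only [hS, symmDiff_symmDiff_cancel_left]
  set n : ℝ := ((Finset.univ : Finset V).card : ℝ) with hn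
  have hnpos : 0 < n := by
    have : 0 < (Finset.univ : Finset V).card := Finset.card_pos.2 ⟨Classical.arbitrary V, mem_univ _⟩
    rw [hn]; exact_mod_cast this
  have hsum : ((A ∪ B).card : ℝ) + ((A ∩ B).card : ℝ) = (A.card : ℝ) + (B.card : ℝ) := by
    exact_mod_cast congrArg (Nat.cast : ℕ → ℝ) (Finset.card_union_add_card_inter A B)
  have hiA : (A ∩ B).card ≤ A.card := Finset.card_le_card (Finset.inter_subset_left)
  have hiB : (A ∩ B).card ≤ B.card := Finset.card_le_card (Finset.inter_subset_right)
  have hprod : ((A ∪ B).card : ℝ) * ((A ∩ B).card : ℝ) ≤ (A.card : ℝ) * (B.card : ℝ) := by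
    have h1 : ((A ∩ B).card : ℝ) ≤ (A.card : ℝ) := by exact_mod_cast hiA
    have h2 : ((A ∩ B).card : ℝ) ≤ (B.card : ℝ) := by exact_mod_cast hiB
    nlinarith [mul_nonneg (sub_nonneg.2 h1) (sub_nonneg.2 h2)]
  have := key_ineq n (γ - 1) ((A ∪ B).card : ℝ) ((A ∩ B).card : ℝ) (A.card : ℝ) (B.card : ℝ)
    hnpos (by linarith) (by positivity) (by positivity) (by positivity) (by positivity) hsum hprod
  linarith
end

section
/- For every 0 < γ < 1, the Sokal–Sneath_γ similarity S(X,Y) = (|V| − |X △ Y|) / (|V| + (γ−1)|X △ Y|) is submodular with respect to the symmetric difference: for every fixed X ⊆ V, the set function f_X : A ↦ S(X, X △ A) is submodular. -/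
open Finset

private lemma ssg_denom_pos (n γ t : ℝ) (hn : 0 < n) (h0 : 0 < γ) (h1 : γ < 1)
    (ht : t ≤ n) : 0 < n + (γ - 1) * t := by
  nlinarith [mul_le_mul_of_nonpos_left ht (by linarith : γ - 1 ≤ 0)]

private lemma ssg_decomp (n γ t : ℝ) (hn : 0 < n) (h0 : 0 < γ) (h1 : γ < 1)
    (ht : t ≤ n) :
    (n - t) / (n + (γ - 1) * t)
      = 1 / (1 - γ) - (n * γ / (1 - γ)) * (1 / (n + (γ - 1) * t)) := by
  have hd := ssg_denom_pos n γ t hn h0 h1 ht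
  have h1γ : (0:ℝ) < 1 - γ := by linarith
  have hd' : n + t * (γ - 1) ≠ 0 := by nlinarith
  field_simp
  ring

private lemma ssg_key (n γ a p q u : ℝ) (hn : 0 < n) (h0 : 0 < γ) (h1 : γ < 1)
    (hap : a ≤ p) (hpu : p ≤ u) (hun : u ≤ n) (ha0 : 0 ≤ a)
    (hsum : a + u = p + q) :
    (n - u) / (n + (γ - 1) * u) + (n - a) / (n + (γ - 1) * a) ≤
      (n - p) / (n + (γ - 1) * p) + (n - q) / (n + (γ - 1) * q) := by
  have hqa : a ≤ q := by linarith
  have hqu : q ≤ u := by linarith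
  have hqn : q ≤ n := by linarith
  have hpn : p ≤ n := by linarith
  have han : a ≤ n := by linarith
  have hx : 0 < n + (γ - 1) * a := ssg_denom_pos n γ a hn h0 h1 han
  have hy : 0 < n + (γ - 1) * u := ssg_denom_pos n γ u hn h0 h1 hun
  have hX : 0 < n + (γ - 1) * p := ssg_denom_pos n γ p hn h0 h1 hpn
  have hY : 0 < n + (γ - 1) * q := ssg_denom_pos n γ q hn h0 h1 hqn
  set x := n + (γ - 1) * a with hxd
  set y := n + (γ - 1) * u with hyd
  set X' := n + (γ - 1) * p with hXd
  set Y' := n + (γ - 1) * q with hYd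
  -- ordering: y ≤ X' ≤ x, same sums
  have hsum' : x + y = X' + Y' := by simp only [hxd, hyd, hXd, hYd]; nlinarith
  have hXx : X' ≤ x := by
    simp only [hxd, hXd]
    nlinarith [mul_le_mul_of_nonpos_left hap (by linarith : γ - 1 ≤ 0)]
  have hyX : y ≤ X' := by
    simp only [hyd, hXd]
    nlinarith [mul_le_mul_of_nonpos_left hpu (by linarith : γ - 1 ≤ 0)]
  have hprod : x * y ≤ X' * Y' := by nlinarith [mul_nonneg (sub_nonneg.2 hXx) (sub_nonneg.2 hyX)]
  -- 1/X' + 1/Y' ≤ 1/x + 1/y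
  have hinv : 1 / X' + 1 / Y' ≤ 1 / x + 1 / y := by
    rw [one_div_add_one_div hX.ne' hY.ne', one_div_add_one_div hx.ne' hy.ne', ← hsum']
    exact div_le_div_of_nonneg_left (by linarith) (mul_pos hx hy) hprod
  have h1γ : (0:ℝ) < 1 - γ := by linarith
  have hM : 0 ≤ n * γ / (1 - γ) := by positivity
  rw [ssg_decomp n γ u hn h0 h1 hun, ssg_decomp n γ a hn h0 h1 han,
    ssg_decomp n γ p hn h0 h1 hpn, ssg_decomp n γ q hn h0 h1 hqn]
  have := mul_le_mul_of_nonneg_left hinv hM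
  linarith [this]

/-- The Sokal–Sneath_γ similarity is submodular w.r.t. the symmetric difference for 0 < γ < 1. -/
theorem sokal_sneath_gamma_submodular {V : Type*} [Fintype V] [DecidableEq V] [Nonempty V]
    (γ : ℝ) (h0 : 0 < γ) (h1 : γ < 1)
    (S : Finset V → Finset V → ℝ)
    (hS : ∀ X Y : Finset V,
      S X Y = ((Finset.univ : Finset V).card - (symmDiff X Y).card) /
        ((Finset.univ : Finset V).card + (γ - 1) * (symmDiff X Y).card))
    (X : Finset V) :
    ∀ A B : Finset V,
      S X (symmDiff X (A ∪ B)) + S X (symmDiff X (A ∩ B)) ≤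
        S X (symmDiff X A) + S X (symmDiff X B) := by
  intro A B
  simp only [hS, symmDiff_symmDiff_cancel_left]
  have hn : (0:ℝ) < (Finset.univ : Finset V).card := by
    have := Fintype.card_pos (α := V)
    simp [Finset.card_univ]
    exact_mod_cast this
  have hcard : (A ∪ B).card + (A ∩ B).card = A.card + B.card :=
    Finset.card_union_add_card_inter A B
  apply ssg_key ((Finset.univ : Finset V).card) γ ((A ∩ B).card) A.card B.card ((A ∪ B).card) hn h0 h1
  · exact_mod_cast Finset.card_le_card Finset.inter_subset_left
  · exact_mod_cast Finset.card_le_card Finset.subset_union_left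
  · exact_mod_cast Finset.card_le_univ _
  · positivity
  · exact_mod_cast (by omega : (A ∩ B).card + (A ∪ B).card = A.card + B.card)
end

section
/- The Braun–Blanquet similarity S(X,Y) = |X ∩ Y| / max(|X|,|Y|) is neither submodular nor supermodular with respect to the symmetric difference: there exist a finite base set V, a set X ⊆ V, and configurations witnessing violation of submodularity and of supermodularity of f_X : A ↦ S(X, X △ A). -/
open Finset

/-- The Braun–Blanquet similarity. -/
noncomputable def braunBlanquetSim (n : ℕ) (X Y : Finset (Fin n)) : ℝ :=
  (X ∩ Y).card / (max X.card Y.card)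

lemma bb_val {n : ℕ} (X Y : Finset (Fin n)) (a b : ℕ)
    (h1 : (X ∩ Y).card = a) (h2 : max X.card Y.card = b) :
    braunBlanquetSim n X Y = (a : ℝ) / b := by
  simp [braunBlanquetSim, h1, h2]

/-- The Braun–Blanquet similarity is neither submodular nor supermodular w.r.t. the
symmetric difference. -/
theorem braun_blanquet_neither_sub_nor_supermodular :
    (∃ (n : ℕ) (X A B : Finset (Fin n)), X.Nonempty ∧
      (symmDiff X A).Nonempty ∧ (symmDiff X B).Nonempty ∧
      (symmDiff X (A ∪ B)).Nonempty ∧ (symmDiff X (A ∩ B)).Nonempty ∧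
      braunBlanquetSim n X (symmDiff X (A ∪ B)) + braunBlanquetSim n X (symmDiff X (A ∩ B)) >
        braunBlanquetSim n X (symmDiff X A) + braunBlanquetSim n X (symmDiff X B)) ∧
    (∃ (n : ℕ) (X A B : Finset (Fin n)), X.Nonempty ∧
      (symmDiff X A).Nonempty ∧ (symmDiff X B).Nonempty ∧
      (symmDiff X (A ∪ B)).Nonempty ∧ (symmDiff X (A ∩ B)).Nonempty ∧
      braunBlanquetSim n X (symmDiff X (A ∪ B)) + braunBlanquetSim n X (symmDiff X (A ∩ B)) <
        braunBlanquetSim n X (symmDiff X A) + braunBlanquetSim n X (symmDiff X B)) := by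
  constructor
  · refine ⟨3, {0}, {1}, {2}, ⟨0, by decide⟩, ⟨0, by decide⟩, ⟨0, by decide⟩,
      ⟨0, by decide⟩, ⟨0, by decide⟩, ?_⟩
    rw [bb_val _ _ 1 3 (by decide) (by decide),
        bb_val _ _ 1 1 (by decide) (by decide),
        bb_val _ _ 1 2 (by decide) (by decide),
        bb_val _ _ 1 2 (by decide) (by decide)]
    norm_num
  · refine ⟨3, {0,1}, {0,2}, {1,2}, ⟨0, by decide⟩, ⟨1, by decide⟩, ⟨0, by decide⟩,
      ⟨2, by decide⟩, ⟨0, by decide⟩, ?_⟩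
    rw [bb_val _ _ 0 2 (by decide) (by decide),
        bb_val _ _ 2 3 (by decide) (by decide),
        bb_val _ _ 1 2 (by decide) (by decide),
        bb_val _ _ 1 2 (by decide) (by decide)]
    norm_num
end

section
/- The Forbes similarity S(X,Y) = |V|·|X ∩ Y| / (|X|·|Y|) is neither submodular nor supermodular with respect to the symmetric difference: there exist a finite base set V, a set X ⊆ V, and configurations witnessing violation of submodularity and of supermodularity of f_X : A ↦ S(X, X △ A). -/
open Finset

/-- The Forbes similarity. -/
noncomputable def forbesSim (n : ℕ) (X Y : Finset (Fin n)) : ℝ :=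
  ((Finset.univ : Finset (Fin n)).card * (X ∩ Y).card) / (X.card * Y.card)

/-- The Forbes similarity is neither submodular nor supermodular w.r.t. the
symmetric difference. -/
theorem forbes_neither_sub_nor_supermodular :
    (∃ (n : ℕ) (X A B : Finset (Fin n)), X.Nonempty ∧
      (symmDiff X A).Nonempty ∧ (symmDiff X B).Nonempty ∧
      (symmDiff X (A ∪ B)).Nonempty ∧ (symmDiff X (A ∩ B)).Nonempty ∧
      forbesSim n X (symmDiff X (A ∪ B)) + forbesSim n X (symmDiff X (A ∩ B)) >
        forbesSim n X (symmDiff X A) + forbesSim n X (symmDiff X B)) ∧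
    (∃ (n : ℕ) (X A B : Finset (Fin n)), X.Nonempty ∧
      (symmDiff X A).Nonempty ∧ (symmDiff X B).Nonempty ∧
      (symmDiff X (A ∪ B)).Nonempty ∧ (symmDiff X (A ∩ B)).Nonempty ∧
      forbesSim n X (symmDiff X (A ∪ B)) + forbesSim n X (symmDiff X (A ∩ B)) <
        forbesSim n X (symmDiff X A) + forbesSim n X (symmDiff X B)) := by
  constructor
  · refine ⟨3, {0}, {1}, {2}, ⟨0, by decide⟩, ?_, ?_, ?_, ?_, ?_⟩
    · exact ⟨0, by decide⟩
    · exact ⟨0, by decide⟩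
    · exact ⟨0, by decide⟩
    · exact ⟨0, by decide⟩
    · have h1 : symmDiff ({0} : Finset (Fin 3)) ({1} ∪ {2}) = {0,1,2} := by decide
      have h2 : symmDiff ({0} : Finset (Fin 3)) ({1} ∩ {2}) = {0} := by decide
      have h3 : symmDiff ({0} : Finset (Fin 3)) {1} = {0,1} := by decide
      have h4 : symmDiff ({0} : Finset (Fin 3)) {2} = {0,2} := by decide
      rw [h1, h2, h3, h4]
      unfold forbesSim
      rw [show (({0} : Finset (Fin 3)) ∩ {0,1,2}) = {0} from by decide,
        show (({0} : Finset (Fin 3)) ∩ {0,1}) = {0} from by decide,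
        show (({0} : Finset (Fin 3)) ∩ {0,2}) = {0} from by decide,
        show (({0} : Finset (Fin 3)) ∩ {0}) = {0} from by decide]
      norm_num [show ({0,1,2} : Finset (Fin 3)).card = 3 from by decide,
        show ({0,1} : Finset (Fin 3)).card = 2 from by decide,
        show ({0,2} : Finset (Fin 3)).card = 2 from by decide,
        show ({0} : Finset (Fin 3)).card = 1 from by decide, Finset.card_univ]
  · refine ⟨3, {0,1}, {0}, {2}, ⟨0, by decide⟩, ?_, ?_, ?_, ?_, ?_⟩
    · exact ⟨1, by decide⟩
    · exact ⟨0, by decide⟩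
    · exact ⟨1, by decide⟩
    · exact ⟨0, by decide⟩
    · have h1 : symmDiff ({0,1} : Finset (Fin 3)) ({0} ∪ {2}) = {1,2} := by decide
      have h2 : symmDiff ({0,1} : Finset (Fin 3)) ({0} ∩ {2}) = {0,1} := by decide
      have h3 : symmDiff ({0,1} : Finset (Fin 3)) {0} = {1} := by decide
      have h4 : symmDiff ({0,1} : Finset (Fin 3)) {2} = {0,1,2} := by decide
      rw [h1, h2, h3, h4]
      unfold forbesSim
      rw [show (({0,1} : Finset (Fin 3)) ∩ {1,2}) = {1} from by decide,
        show (({0,1} : Finset (Fin 3)) ∩ {0,1}) = {0,1} from by decide,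
        show (({0,1} : Finset (Fin 3)) ∩ {1}) = {1} from by decide,
        show (({0,1} : Finset (Fin 3)) ∩ {0,1,2}) = {0,1} from by decide]
      norm_num [show ({0,1} : Finset (Fin 3)).card = 2 from by decide,
        show ({1,2} : Finset (Fin 3)).card = 2 from by decide,
        show ({1} : Finset (Fin 3)).card = 1 from by decide,
        show ({0,1,2} : Finset (Fin 3)).card = 3 from by decide, Finset.card_univ]
end

section
/- Equivalently: if f : P(V) → ℝ is supermodular, monotone nonincreasing, nonnegative, and f(∅) = 1, then for all X, Y, Z ⊆ V, f(X △ Y) + f(Y △ Z) ≤ f(X △ Z) + 1. -/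
open Finset

/-- Supermodular, nonincreasing, nonnegative f with f(∅) = 1 satisfies
f(X △ Y) + f(Y △ Z) ≤ f(X △ Z) + 1. -/
theorem supermodular_similarity_triangle {V : Type*} [Fintype V] [DecidableEq V]
    (f : Finset V → ℝ)
    (hsuper : ∀ A B : Finset V, f (A ∪ B) + f (A ∩ B) ≥ f A + f B)
    (hmono : ∀ A B : Finset V, A ⊆ B → f B ≤ f A)
    (hnonneg : ∀ A : Finset V, 0 ≤ f A)
    (hempty : f ∅ = 1) :
    ∀ X Y Z : Finset V,
      f (symmDiff X Y) + f (symmDiff Y Z) ≤ f (symmDiff X Z) + 1 := by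
  intro X Y Z
  set A := symmDiff X Y
  set B := symmDiff Y Z
  have h1 : f A + f B ≤ f (A ∪ B) + f (A ∩ B) := hsuper A B
  have h2 : f (A ∪ B) ≤ f (symmDiff X Z) := by
    apply hmono
    simpa [A, B, sup_eq_union] using symmDiff_triangle X Y Z
  have h3 : f (A ∩ B) ≤ 1 := hempty ▸ hmono ∅ (A ∩ B) (empty_subset _)
  linarith
end

section
/- Let f and g be two nonnegative supermodular set functions on P(V) that are both nonincreasing or both nondecreasing. Then the pointwise product fg is supermodular. -/
open Finset

/-- The product of two nonnegative supermodular set functions that are both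
nonincreasing or both nondecreasing is supermodular. -/
theorem product_supermodular {V : Type*} [Fintype V] [DecidableEq V]
    (f g : Finset V → ℝ)
    (hf : ∀ A B : Finset V, f (A ∪ B) + f (A ∩ B) ≥ f A + f B)
    (hg : ∀ A B : Finset V, g (A ∪ B) + g (A ∩ B) ≥ g A + g B)
    (hf0 : ∀ A : Finset V, 0 ≤ f A)
    (hg0 : ∀ A : Finset V, 0 ≤ g A)
    (hmono : ((∀ A B : Finset V, A ⊆ B → f B ≤ f A) ∧ (∀ A B : Finset V, A ⊆ B → g B ≤ g A)) ∨
             ((∀ A B : Finset V, A ⊆ B → f A ≤ f B) ∧ (∀ A B : Finset V, A ⊆ B → g A ≤ g B))) :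
    ∀ A B : Finset V,
      f (A ∪ B) * g (A ∪ B) + f (A ∩ B) * g (A ∩ B) ≥ f A * g A + f B * g B := by
  intro A B
  have hAu : A ⊆ A ∪ B := Finset.subset_union_left
  have hBu : B ⊆ A ∪ B := Finset.subset_union_right
  have hiA : A ∩ B ⊆ A := Finset.inter_subset_left
  have hiB : A ∩ B ⊆ B := Finset.inter_subset_right
  rcases hmono with ⟨hfm, hgm⟩ | ⟨hfm, hgm⟩
  · -- nonincreasing case
    have h1 : (f (A ∩ B) - (f A + f B - f (A ∪ B))) * g (A ∩ B) ≥ 0 :=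
      mul_nonneg (by linarith [hf A B]) (hg0 (A ∩ B))
    have h2 : (f A - f (A ∪ B)) * (g (A ∩ B) - g A) ≥ 0 :=
      mul_nonneg (by linarith [hfm A (A ∪ B) hAu]) (by linarith [hgm (A ∩ B) A hiA])
    have h3 : (f B - f (A ∪ B)) * (g (A ∩ B) - g B) ≥ 0 :=
      mul_nonneg (by linarith [hfm B (A ∪ B) hBu]) (by linarith [hgm (A ∩ B) B hiB])
    have h4 : f (A ∪ B) * ((g (A ∪ B) + g (A ∩ B)) - (g A + g B)) ≥ 0 :=
      mul_nonneg (hf0 (A ∪ B)) (by linarith [hg A B])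
    nlinarith [h1, h2, h3, h4]
  · -- nondecreasing case
    have h1 : (f (A ∪ B) - (f A + f B - f (A ∩ B))) * g (A ∪ B) ≥ 0 :=
      mul_nonneg (by linarith [hf A B]) (hg0 (A ∪ B))
    have h2 : (f A - f (A ∩ B)) * (g (A ∪ B) - g A) ≥ 0 :=
      mul_nonneg (by linarith [hfm (A ∩ B) A hiA]) (by linarith [hgm A (A ∪ B) hAu])
    have h3 : (f B - f (A ∩ B)) * (g (A ∪ B) - g B) ≥ 0 :=
      mul_nonneg (by linarith [hfm (A ∩ B) B hiB]) (by linarith [hgm B (A ∪ B) hBu])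
    have h4 : f (A ∩ B) * ((g (A ∪ B) + g (A ∩ B)) - (g A + g B)) ≥ 0 :=
      mul_nonneg (hf0 (A ∩ B)) (by linarith [hg A B])
    nlinarith [h1, h2, h3, h4]
end

section
/- If g : P(V) → [0,1] is a nonnegative, monotone nonincreasing, supermodular set function with g(∅) = 1, then for every nonnegative integer n, the pointwise power gⁿ is also nonnegative, monotone nonincreasing, supermodular, and satisfies gⁿ(∅) = 1. -/
open Finset

lemma pow_super_key (x y a b : ℝ) (hy : 0 ≤ y) (hya : y ≤ a) (hyb : y ≤ b)
    (hax : a ≤ x) (hbx : b ≤ x) (hsum : a + b ≤ x + y) :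
    ∀ n : ℕ, a ^ n + b ^ n ≤ x ^ n + y ^ n := by
  intro n
  induction n with
  | zero => simp
  | succ n ih =>
    have hx0 : (0:ℝ) ≤ x := le_trans hy (le_trans hya hax)
    have h1 : y ^ n ≤ a ^ n := pow_le_pow_left₀ hy hya n
    have h2 : y ^ n ≤ b ^ n := pow_le_pow_left₀ hy hyb n
    have h3 : (0:ℝ) ≤ y ^ n := pow_nonneg hy n
    rw [pow_succ x, pow_succ y, pow_succ a, pow_succ b]
    nlinarith [mul_le_mul_of_nonneg_right ih hx0,
      mul_nonneg (sub_nonneg.2 hax) (sub_nonneg.2 h1),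
      mul_nonneg (sub_nonneg.2 hbx) (sub_nonneg.2 h2),
      mul_nonneg (by linarith : (0:ℝ) ≤ x + y - a - b) h3]

/-- Powers of a nonnegative, nonincreasing, supermodular set function with
g(∅) = 1 and values in [0,1] retain all these properties. -/
theorem pow_supermodular {V : Type*} [Fintype V] [DecidableEq V]
    (g : Finset V → ℝ)
    (hrange : ∀ A : Finset V, 0 ≤ g A ∧ g A ≤ 1)
    (hmono : ∀ A B : Finset V, A ⊆ B → g B ≤ g A)
    (hsuper : ∀ A B : Finset V, g (A ∪ B) + g (A ∩ B) ≥ g A + g B)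
    (hempty : g ∅ = 1) :
    ∀ n : ℕ,
      (∀ A : Finset V, 0 ≤ (g A) ^ n) ∧
      (∀ A B : Finset V, A ⊆ B → (g B) ^ n ≤ (g A) ^ n) ∧
      (∀ A B : Finset V, (g (A ∪ B)) ^ n + (g (A ∩ B)) ^ n ≥ (g A) ^ n + (g B) ^ n) ∧
      (g ∅) ^ n = 1 := by
  intro n
  refine ⟨fun A => pow_nonneg (hrange A).1 n, fun A B hAB => pow_le_pow_left₀ (hrange B).1 (hmono A B hAB) n, fun A B => ?_, by rw [hempty, one_pow]⟩
  have h := pow_super_key (g (A ∩ B)) (g (A ∪ B)) (g A) (g B)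
    (hrange _).1
    (hmono A (A ∪ B) Finset.subset_union_left)
    (hmono B (A ∪ B) Finset.subset_union_right)
    (hmono (A ∩ B) A Finset.inter_subset_left)
    (hmono (A ∩ B) B Finset.inter_subset_right)
    (by linarith [hsuper A B]) n
  linarith
end

section
/- Let f(x) = Σᵢ pᵢ xⁱ be a power series with pᵢ ≥ 0 and Σᵢ pᵢ ≤ 1 (an LSH-preserving function, i.e., a nonnegative multiple of a probability generating function), and let g : P(V) → [0,1] be supermodular, monotone nonincreasing, nonnegative with g(∅) = 1. Then f ∘ g is supermodular, monotone nonincreasing, with values in [0,1]. -/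
open Finset

private lemma lsh_summable (p : ℕ → ℝ) (hp : ∀ i, 0 ≤ p i) (hpsum : Summable p)
    {x : ℝ} (hx0 : 0 ≤ x) (hx1 : x ≤ 1) : Summable (fun i => p i * x ^ i) := by
  refine hpsum.of_nonneg_of_le (fun i => mul_nonneg (hp i) (pow_nonneg hx0 i)) (fun i => ?_)
  calc p i * x ^ i ≤ p i * 1 := by
        gcongr
        · exact hp i
        · exact pow_le_one₀ hx0 hx1
    _ = p i := mul_one _

private lemma pow_majorize (n : ℕ) {u a b v : ℝ} (hu : 0 ≤ u) (hua : u ≤ a)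
    (hab : a ≤ b) (hbv : b ≤ v) (hsum : u + v = a + b) :
    a ^ n + b ^ n ≤ u ^ n + v ^ n := by
  rcases eq_or_lt_of_le (hua.trans (hab.trans hbv)) with h | huv
  · have ha : a = u := le_antisymm (by linarith) hua
    have hb : b = v := le_antisymm hbv (by linarith)
    rw [ha, hb]
  · have hvu : v - u ≠ 0 := by linarith
    set t : ℝ := (v - a) / (v - u) with ht
    have ht0 : 0 ≤ t := div_nonneg (by linarith) (by linarith)
    have ht1 : t ≤ 1 := by
      rw [div_le_one (by linarith)]; linarith
    have hmemu : u ∈ Set.Ici (0:ℝ) := hu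
    have hmemv : v ∈ Set.Ici (0:ℝ) := le_trans hu (by linarith)
    have h1 := (convexOn_pow n).2 hmemu hmemv ht0 (by linarith : (0:ℝ) ≤ 1 - t)
      (by ring)
    have h2 := (convexOn_pow n).2 hmemu hmemv (by linarith : (0:ℝ) ≤ 1 - t) ht0
      (by ring)
    simp only [smul_eq_mul] at h1 h2
    have ea : t * u + (1 - t) * v = a := by
      have key : t * (v - u) = v - a := by rw [ht]; exact div_mul_cancel₀ _ hvu
      linear_combination -key
    have eb : (1 - t) * u + t * v = b := by
      have h' : (1 - t) * u + t * v = (u + v) - (t * u + (1 - t) * v) := by ring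
      rw [h', ea]; linarith
    rw [ea] at h1
    rw [eb] at h2
    nlinarith [h1, h2]

/-- An LSH-preserving function (a nonnegative multiple of a probability
generating function) composed with a supermodular, nonincreasing, nonnegative
set function g with g(∅) = 1 is supermodular, nonincreasing, with values in [0,1]. -/
theorem lsh_preserving_is_supermodular_preserving {V : Type*} [Fintype V] [DecidableEq V]
    (p : ℕ → ℝ) (hp : ∀ i, 0 ≤ p i) (hpsum : Summable p) (hp1 : ∑' i, p i ≤ 1)
    (g : Finset V → ℝ)
    (hrange : ∀ A : Finset V, 0 ≤ g A ∧ g A ≤ 1)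
    (hmono : ∀ A B : Finset V, A ⊆ B → g B ≤ g A)
    (hsuper : ∀ A B : Finset V, g (A ∪ B) + g (A ∩ B) ≥ g A + g B)
    (hempty : g ∅ = 1)
    (f : ℝ → ℝ) (hf : ∀ x : ℝ, f x = ∑' i, p i * x ^ i) :
    (∀ A B : Finset V, f (g (A ∪ B)) + f (g (A ∩ B)) ≥ f (g A) + f (g B)) ∧
    (∀ A B : Finset V, A ⊆ B → f (g B) ≤ f (g A)) ∧
    (∀ A : Finset V, 0 ≤ f (g A) ∧ f (g A) ≤ 1) := by
  have hsummable : ∀ {x : ℝ}, 0 ≤ x → x ≤ 1 → Summable (fun i => p i * x ^ i) :=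
    fun hx0 hx1 => lsh_summable p hp hpsum hx0 hx1
  -- monotonicity of f on [0,1]
  have fmono : ∀ {x y : ℝ}, 0 ≤ x → x ≤ y → y ≤ 1 → f x ≤ f y := by
    intro x y hx0 hxy hy1
    rw [hf x, hf y]
    refine Summable.tsum_le_tsum (fun i => ?_) (hsummable hx0 (hxy.trans hy1))
      (hsummable (hx0.trans hxy) hy1)
    exact mul_le_mul_of_nonneg_left (pow_le_pow_left₀ hx0 hxy i) (hp i)
  -- key supermodularity step for f, assuming a ≤ b
  have fkey : ∀ {u a b v : ℝ}, 0 ≤ u → u ≤ a → a ≤ b → b ≤ v → v ≤ 1 →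
      a + b ≤ u + v → f a + f b ≤ f u + f v := by
    intro u a b v hu hua hab hbv hv1 hs
    set v' : ℝ := a + b - u with hv'
    have hbv' : b ≤ v' := by simp only [hv']; linarith
    have hv'v : v' ≤ v := by simp only [hv']; linarith
    have hb0 : 0 ≤ b := hu.trans (hua.trans hab)
    have hv'0 : 0 ≤ v' := hb0.trans hbv'
    have hv'1 : v' ≤ 1 := hv'v.trans hv1
    have ha0 : 0 ≤ a := hu.trans hua
    have step1 : f a + f b ≤ f u + f v' := by
      rw [hf a, hf b, hf u, hf v']
      rw [← Summable.tsum_add (hsummable ha0 (hab.trans (hbv'.trans hv'1)))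
        (hsummable hb0 (hbv'.trans hv'1)),
        ← Summable.tsum_add (hsummable hu ((hua.trans hab).trans (hbv'.trans hv'1)))
        (hsummable (hb0.trans hbv') hv'1)]
      refine Summable.tsum_le_tsum (fun i => ?_) ?_ ?_
      · have := pow_majorize i hu hua hab hbv' (by rw [hv']; ring)
        nlinarith [hp i, this]
      · exact ((hsummable ha0 (hab.trans (hbv'.trans hv'1)))).add
          (hsummable hb0 (hbv'.trans hv'1))
      · exact (hsummable hu ((hua.trans hab).trans (hbv'.trans hv'1))).add
          (hsummable (hb0.trans hbv') hv'1)
    have step2 : f v' ≤ f v := fmono (hb0.trans hbv') hv'v hv1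
    linarith
  have fsuper : ∀ {u a b v : ℝ}, 0 ≤ u → u ≤ a → u ≤ b → a ≤ v → b ≤ v → v ≤ 1 →
      a + b ≤ u + v → f a + f b ≤ f u + f v := by
    intro u a b v hu hua hub hav hbv hv1 hs
    rcases le_total a b with h | h
    · exact fkey hu hua h hbv hv1 hs
    · have := fkey hu hub h hav hv1 (by linarith)
      linarith
  refine ⟨?_, ?_, ?_⟩
  · intro A B
    have h1 := hmono A (A ∪ B) subset_union_left
    have h2 := hmono B (A ∪ B) subset_union_right
    have h3 := hmono (A ∩ B) A inter_subset_left
    have h4 := hmono (A ∩ B) B inter_subset_right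
    have h5 := hsuper A B
    have := fsuper (hrange (A ∪ B)).1 h1 h2 h3 h4 (hrange (A ∩ B)).2 (by linarith)
    linarith
  · intro A B hAB
    exact fmono (hrange B).1 (hmono A B hAB) (hrange A).2
  · intro A
    constructor
    · rw [hf]
      exact tsum_nonneg fun i => mul_nonneg (hp i) (pow_nonneg (hrange A).1 i)
    · rw [hf]
      calc ∑' i, p i * g A ^ i ≤ ∑' i, p i := by
            refine Summable.tsum_le_tsum (fun i => ?_) (hsummable (hrange A).1 (hrange A).2) hpsum
            calc p i * g A ^ i ≤ p i * 1 := by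
                  gcongr
                  · exact hp i
                  · exact pow_le_one₀ (hrange A).1 (hrange A).2
              _ = p i := mul_one _
        _ ≤ 1 := hp1
end

section
/- The function f(x) = (3/2)x² − (1/2)x³ on [0,1] satisfies: (i) f is not expressible as α·Σᵢ pᵢ xⁱ with α ∈ [0,1], pᵢ ≥ 0, Σ pᵢ = 1 (i.e., f is not an LSH-preserving function), but (ii) f is convex composed with h(x) = 1 − x/n in the sense that x ↦ f(1 − x/n) is convex, nonincreasing, nonnegative on [0, n], and f(h(0)) = 1, for every positive integer n. -/
/-- f(x) = (3/2)x² − (1/2)x³ is not LSH-preserving, yet composed with the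
Hamming function h(x) = 1 − x/n it is convex, nonincreasing, nonnegative on
[0,n] with f(h(0)) = 1. -/
theorem cshs_strictly_larger (f : ℝ → ℝ)
    (hf : ∀ x : ℝ, f x = 3 / 2 * x ^ 2 - 1 / 2 * x ^ 3) :
    (¬ ∃ (α : ℝ) (p : ℕ → ℝ), 0 ≤ α ∧ α ≤ 1 ∧ (∀ i, 0 ≤ p i) ∧ Summable p ∧
        (∑' i, p i) = 1 ∧ ∀ x ∈ Set.Ico (0 : ℝ) 1, f x = α * ∑' i, p i * x ^ i) ∧
    (∀ n : ℕ, 0 < n →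
      ConvexOn ℝ (Set.Icc (0 : ℝ) (n : ℝ)) (fun x => f (1 - x / n)) ∧
      AntitoneOn (fun x => f (1 - x / n)) (Set.Icc (0 : ℝ) (n : ℝ)) ∧
      (∀ x ∈ Set.Icc (0 : ℝ) (n : ℝ), 0 ≤ f (1 - x / n)) ∧
      f (1 - 0 / n) = 1) := by
  constructor
  · rintro ⟨α, p, hα0, hα1, hp, hsum, htsum, heq⟩
    have hhalf : (1/2 : ℝ) ∈ Set.Ico (0:ℝ) 1 := by norm_num
    have hfhalf : f (1/2) = 5/16 := by rw [hf]; norm_num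
    rcases eq_or_lt_of_le hα0 with hα | hα
    · have := heq (1/2) hhalf
      rw [hfhalf, ← hα, zero_mul] at this
      norm_num at this
    -- summability of p i * x^i for x ∈ [0,1)
    have hsx : ∀ x : ℝ, 0 ≤ x → x ≤ 1 → Summable (fun i => p i * x ^ i) := by
      intro x hx0 hx1
      refine Summable.of_nonneg_of_le (fun i => mul_nonneg (hp i) (pow_nonneg hx0 i))
        (fun i => ?_) hsum
      calc p i * x ^ i ≤ p i * 1 := by
            gcongr
            · exact hp i
            · exact pow_le_one₀ hx0 hx1
        _ = p i := mul_one _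
    -- p 0 = 0
    have hp0 : p 0 = 0 := by
      have h0 := heq 0 (by norm_num)
      have hf0 : f 0 = 0 := by rw [hf]; norm_num
      have ht0 : (∑' i, p i * (0:ℝ) ^ i) = p 0 := by
        rw [tsum_eq_single 0]
        · norm_num
        · intro i hi
          rw [zero_pow hi, mul_zero]
      rw [hf0, ht0] at h0
      have := mul_eq_zero.mp h0.symm
      rcases this with h | h
      · exact absurd h (ne_of_gt hα)
      · exact h
    -- p 1 = 0
    have hp1 : p 1 = 0 := by
      by_contra h
      have hp1pos : 0 < p 1 := lt_of_le_of_ne (hp 1) (Ne.symm h)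
      have key : ∀ x : ℝ, 0 < x → x < 1 → α * p 1 ≤ 3/2 * x := by
        intro x hx0 hx1
        have hmem : x ∈ Set.Ico (0:ℝ) 1 := ⟨le_of_lt hx0, hx1⟩
        have hle : p 1 * x ^ 1 ≤ ∑' i, p i * x ^ i :=
          Summable.le_tsum (hsx x (le_of_lt hx0) (le_of_lt hx1)) 1
            (fun j _ => mul_nonneg (hp j) (pow_nonneg (le_of_lt hx0) j))
        have h2 : α * (p 1 * x ^ 1) ≤ α * ∑' i, p i * x ^ i := by
          exact mul_le_mul_of_nonneg_left hle hα0
        rw [← heq x hmem, hf] at h2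
        have hx2 : α * p 1 * x ≤ 3/2 * x^2 := by nlinarith [pow_nonneg (le_of_lt hx0) 3]
        have := le_of_mul_le_mul_right (by nlinarith : α * p 1 * x ≤ (3/2 * x) * x) hx0
        exact this
      set c := α * p 1 with hc
      have hcpos : 0 < c := mul_pos hα hp1pos
      have hx : (0:ℝ) < min (c/3) (1/2) := by positivity
      have hx1 : min (c/3) (1/2) < 1 := lt_of_le_of_lt (min_le_right _ _) (by norm_num)
      have h1 := key _ hx hx1
      have : 3/2 * min (c/3) (1/2) ≤ 3/2 * (c/3) :=
        mul_le_mul_of_nonneg_left (min_le_left _ _) (by norm_num)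
      linarith
    -- main bound at x = 1/2
    have hS : (∑' i, p i * (1/2:ℝ) ^ i) ≤ ∑' i, p i * (1/4 : ℝ) := by
      refine Summable.tsum_le_tsum (fun i => ?_) (hsx (1/2) (by norm_num) (by norm_num))
        (hsum.mul_right _)
      match i with
      | 0 => simp [hp0]
      | 1 => simp [hp1]
      | (k+2) =>
        have h4 : ((1:ℝ)/2) ^ (k+2) ≤ (1/4 : ℝ) := by
          calc ((1:ℝ)/2) ^ (k+2) ≤ ((1:ℝ)/2) ^ 2 :=
                pow_le_pow_of_le_one (by norm_num) (by norm_num) (by omega)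
            _ = 1/4 := by norm_num
        exact mul_le_mul_of_nonneg_left h4 (hp _)
    have hSr : (∑' i, p i * (1/4 : ℝ)) = 1/4 := by
      rw [tsum_mul_right, htsum, one_mul]
    have hfin := heq (1/2) hhalf
    rw [hfhalf] at hfin
    have hSnn : 0 ≤ ∑' i, p i * (1/2:ℝ)^i :=
      tsum_nonneg (fun i => mul_nonneg (hp i) (by positivity))
    have hS4 : (∑' i, p i * (1/2:ℝ)^i) ≤ 1/4 := hSr ▸ hS
    have : α * ∑' i, p i * (1/2:ℝ)^i ≤ 1 * (1/4) :=
      mul_le_mul hα1 hS4 hSnn zero_le_one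
    rw [← hfin] at this
    norm_num at this
  · intro n hn
    have hn' : (0:ℝ) < n := by exact_mod_cast hn
    have hmem : ∀ x : ℝ, x ∈ Set.Icc (0:ℝ) (n:ℝ) → 0 ≤ 1 - x/n ∧ 1 - x/n ≤ 1 := by
      intro x hx
      constructor
      · have : x / n ≤ 1 := by rw [div_le_one hn']; exact hx.2
        linarith
      · have : 0 ≤ x / n := div_nonneg hx.1 (le_of_lt hn')
        linarith
    refine ⟨?_, ?_, ?_, ?_⟩
    · constructor
      · exact convex_Icc _ _
      · intro x hx y hy a b ha hb hab
        simp only [smul_eq_mul, hf]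
        obtain ⟨hu0, hu1⟩ := hmem x hx
        obtain ⟨hv0, hv1⟩ := hmem y hy
        set u := 1 - x/n
        set v := 1 - y/n
        have hw : 1 - (a*x + b*y)/n = a*u + b*v := by
          field_simp [u, v]
          ring_nf
          simp only [u, v]
          field_simp
          linear_combination (-(n:ℝ)) * hab
        rw [hw]
        clear_value u v
        have E : 0 ≤ a*b*(u-v)^2 := mul_nonneg (mul_nonneg ha hb) (sq_nonneg (u-v))
        have hb' : b = 1 - a := by linarith
        subst hb'
        have key : a*(3/2*u^2-1/2*u^3) + (1-a)*(3/2*v^2-1/2*v^3)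
            - (3/2*(a*u+(1-a)*v)^2 - 1/2*(a*u+(1-a)*v)^3)
            = a*(1-a)*(u-v)^2*(3 - u - v - (a*u+(1-a)*v))/2 := by ring
        have hbr : 0 ≤ 3 - u - v - (a*u+(1-a)*v) := by
          nlinarith [mul_nonneg ha (sub_nonneg.2 hu1), mul_nonneg hb (sub_nonneg.2 hv1)]
        nlinarith [mul_nonneg E hbr]
    · intro x hx y hy hxy
      simp only [hf]
      obtain ⟨hv0, hv1⟩ := hmem x hx
      obtain ⟨hu0, hu1⟩ := hmem y hy
      set u := 1 - y/n
      set v := 1 - x/n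
      have huv : u ≤ v := by
        have : x / n ≤ y / n := by gcongr
        simp only [u, v]; linarith
      have d : 0 ≤ v - u := sub_nonneg.2 huv
      clear_value u v
      nlinarith [mul_nonneg (mul_nonneg d hu0) (sub_nonneg.2 hu1),
        mul_nonneg (mul_nonneg d hv0) (sub_nonneg.2 hv1),
        mul_nonneg (mul_nonneg d hv0) (sub_nonneg.2 hu1)]
    · intro x hx
      obtain ⟨ht0, ht1⟩ := hmem x hx
      rw [hf]
      nlinarith [sq_nonneg (1 - x/n)]
    · rw [hf]; norm_num
end
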